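/- Let ξ* = (3 + √17)/2, c = (ξ* − 3)/(ξ* − 1), and let r₀ > 0. Set t* = r₀²/(2c), and define r(t) = √(r₀² − 2ct) and R(t) = ξ*·r(t) for t ∈ [0, t*). Then 0 < r(t) < R(t) for all t, r(0) = r₀, R(0) = ξ* r₀, the pair (R, r) satisfies R′ = −2/(R − r) and r′ = −(R − 3r)/(r(R − r)) on [0, t*), and r(t) → 0 as t → t*⁻. In particular the ratio R(t)/r(t) is constantly ξ*, so the evolution is self-similar. -/

import Mathlib

/-- The self-similar shrinking sponge: with `ξ* = (3+√17)/2`, `c = (ξ*−3)/(ξ*−1)`,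
`r(t) = √(r₀² − 2ct)` and `R = ξ*·r` solve the sponge ODE system on `[0, t*)`,
`t* = r₀²/(2c)`, with `0 < r < R`, the given initial data, `r(t) → 0` as `t → t*⁻`,
and constant ratio `R/r = ξ*`. -/
theorem self_similar_sponge
    (ξs c r₀ tstar : ℝ) (hξs : ξs = (3 + Real.sqrt 17) / 2)
    (hc : c = (ξs - 3) / (ξs - 1)) (hr₀ : 0 < r₀) (hts : tstar = r₀ ^ 2 / (2 * c))
    (r R : ℝ → ℝ)
    (hrdef : ∀ t, r t = Real.sqrt (r₀ ^ 2 - 2 * c * t))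
    (hRdef : ∀ t, R t = ξs * r t) :
    (∀ t ∈ Set.Ico 0 tstar, 0 < r t ∧ r t < R t) ∧
    r 0 = r₀ ∧ R 0 = ξs * r₀ ∧
    (∀ t ∈ Set.Ico 0 tstar,
      HasDerivAt R (-2 / (R t - r t)) t ∧
      HasDerivAt r (-(R t - 3 * r t) / (r t * (R t - r t))) t) ∧
    Filter.Tendsto r (nhdsWithin tstar (Set.Iio tstar)) (nhds 0) ∧
    (∀ t ∈ Set.Ico 0 tstar, R t / r t = ξs) := by
  have hs17 : Real.sqrt 17 ^ 2 = 17 := Real.sq_sqrt (by norm_num)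
  have hs3 : (4 : ℝ) < Real.sqrt 17 := by
    have : Real.sqrt 16 < Real.sqrt 17 := Real.sqrt_lt_sqrt (by norm_num) (by norm_num)
    simpa [show (16:ℝ) = 4^2 by norm_num, Real.sqrt_sq] using this
  have hξ3 : 3 < ξs := by rw [hξs]; nlinarith
  have hξ1 : 1 < ξs := by linarith
  have hcpos : 0 < c := by
    rw [hc]; exact div_pos (by linarith) (by linarith)
  have hquad : ξs * (ξs - 3) = 2 := by rw [hξs]; nlinarith
  have hrad : ∀ t ∈ Set.Ico 0 tstar, 0 < r₀ ^ 2 - 2 * c * t := by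
    intro t ht
    have h2 : t < r₀ ^ 2 / (2 * c) := hts ▸ ht.2
    have h3 : t * (2 * c) < r₀ ^ 2 := (lt_div_iff₀ (by positivity)).mp h2
    nlinarith
  have hrpos : ∀ t ∈ Set.Ico 0 tstar, 0 < r t := by
    intro t ht; rw [hrdef t]; exact Real.sqrt_pos.mpr (hrad t ht)
  refine ⟨?_, ?_, ?_, ?_, ?_, ?_⟩
  · intro t ht
    refine ⟨hrpos t ht, ?_⟩
    rw [hRdef t]
    nlinarith [hrpos t ht]
  · rw [hrdef 0]
    simp [Real.sqrt_sq hr₀.le]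
  · rw [hRdef 0, hrdef 0]
    simp [Real.sqrt_sq hr₀.le]
  · intro t ht
    have hrp := hrpos t ht
    have hrne : r t ≠ 0 := hrp.ne'
    have h1 : ξs - 1 ≠ 0 := by linarith
    have h3 : ξs * r t - r t ≠ 0 := by nlinarith
    have hradp := hrad t ht
    have hinner : HasDerivAt (fun x => r₀ ^ 2 - 2 * c * x) (-(2 * c)) t := by
      exact (((hasDerivAt_id t).const_mul (2 * c)).const_sub (r₀ ^ 2)).congr_deriv (by ring)
    have hsq : HasDerivAt (fun x => Real.sqrt (r₀ ^ 2 - 2 * c * x))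
        (1 / (2 * Real.sqrt (r₀ ^ 2 - 2 * c * t)) * (-(2 * c))) t :=
      (Real.hasDerivAt_sqrt hradp.ne').comp t hinner
    have hreq : r = fun x => Real.sqrt (r₀ ^ 2 - 2 * c * x) := funext hrdef
    have hval : 1 / (2 * Real.sqrt (r₀ ^ 2 - 2 * c * t)) * (-(2 * c)) = -c / r t := by
      rw [← hrdef t]; field_simp
    have hrder : HasDerivAt r (-c / r t) t := by
      rw [hval, ← hreq] at hsq; exact hsq
    have hrder' : HasDerivAt r (-(R t - 3 * r t) / (r t * (R t - r t))) t := by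
      have key : -(R t - 3 * r t) / (r t * (R t - r t)) = -c / r t := by
        rw [hRdef t, hc]
        field_simp
      rw [key]; exact hrder
    refine ⟨?_, hrder'⟩
    have hReq : R = fun x => ξs * r x := funext hRdef
    have hRder : HasDerivAt R (ξs * (-c / r t)) t := by
      rw [hReq]; exact hrder.const_mul ξs
    have key2 : -2 / (R t - r t) = ξs * (-c / r t) := by
      rw [hRdef t, hc]
      field_simp
      linear_combination hquad
    rw [key2]; exact hRder
  · have hcont : Continuous fun x => Real.sqrt (r₀ ^ 2 - 2 * c * x) :=
      Real.continuous_sqrt.comp (by continuity)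
    have hreq : r = fun x => Real.sqrt (r₀ ^ 2 - 2 * c * x) := funext hrdef
    have h0 : Real.sqrt (r₀ ^ 2 - 2 * c * tstar) = 0 := by
      rw [hts]
      have : r₀ ^ 2 - 2 * c * (r₀ ^ 2 / (2 * c)) = 0 := by field_simp; ring
      rw [this, Real.sqrt_zero]
    rw [hreq]
    have := (hcont.tendsto tstar).mono_left (nhdsWithin_le_nhds (s := Set.Iio tstar))
    rwa [h0] at this
  · intro t ht
    rw [hRdef t, mul_div_assoc, div_self (hrpos t ht).ne', mul_one]
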